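/- Let G be a finite connected graph with terminals T ⊆ V(G) and required grades R : T → {1,…,ℓ}, and let (G', y) be a feasible V-GSST solution. Let r ∈ T with R(r) = ℓ. Then there exist a subtree G'' of G' spanning T and assigned grades y' : V(G) → {0,…,ℓ} with y'(v) ≤ y(v) for every v, such that (G'', y') is a feasible V-GSST solution, G'' is a grade-respecting tree rooted at r under y', and G'' is T-optimized. Consequently, for installation costs with 0 = c_0(v) ≤ c_1(v) ≤ … ≤ c_ℓ(v) for all v, the cost of (G'', y') is at most the cost of (G', y); in particular there exists a minimum-cost feasible solution that is a T-optimized grade-respecting tree rooted at r. -/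

import Mathlib

/-- `(H, y)` is a feasible V-GSST solution: `H` is a subtree of `G` spanning the terminals `T`,
the grades `y` are at most `ℓ`, vanish outside `H`, satisfy `R v ≤ y v` on terminals, and every
vertex on the unique path in `H` between two terminals `u, v` has grade at least
`min (R u) (R v)`. -/
def VgsstFeasible {V : Type*} {G : SimpleGraph V} (T : Set V) (R : V → ℕ) (ℓ : ℕ)
    (H : G.Subgraph) (y : V → ℕ) : Prop :=
  H.Connected ∧ H.coe.IsAcyclic ∧ T ⊆ H.verts ∧
  (∀ v : V, y v ≤ ℓ) ∧ (∀ v : V, v ∉ H.verts → y v = 0) ∧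
  (∀ v ∈ T, R v ≤ y v) ∧
  (∀ u ∈ T, ∀ v ∈ T, ∀ (hu : u ∈ H.verts) (hv : v ∈ H.verts),
    ∀ p : H.coe.Walk ⟨u, hu⟩ ⟨v, hv⟩,
      p.IsPath → ∀ w ∈ p.support, min (R u) (R v) ≤ y w.1)

/-- The cost of a solution: the sum of the installation costs `c (y v) v` over the vertices of
`H`. -/
noncomputable def vgsstCost {V : Type*} [Fintype V] {G : SimpleGraph V}
    (c : ℕ → V → ℝ) (H : G.Subgraph) (y : V → ℕ) : ℝ :=
  ∑ v : V, H.verts.indicator (fun v => c (y v) v) v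

/-- `H` with labels `y` is a grade-respecting tree rooted at `r`: the labels along the unique
path in `H` from `r` to any vertex are non-increasing. -/
def IsGRTRootedAt {V : Type*} {G : SimpleGraph V} (H : G.Subgraph) (y : V → ℕ) (r : V) : Prop :=
  ∃ hr : r ∈ H.verts, ∀ (v : H.verts) (p : H.coe.Walk ⟨r, hr⟩ v),
    p.IsPath → (p.support.map fun w => y w.1).Chain' (fun a b => b ≤ a)

/-- `H` (a grade-respecting tree rooted at `r` with labels `y`) is `M`-optimized: every leaf of
`H` belongs to `M`, and for every vertex `v ∉ M` of `H`, `y v` is the maximum of `y w` over the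
vertices `w ∈ M` lying in the subtree rooted at `v` (i.e. such that `v` lies on the unique path
from `r` to `w`). -/
def IsOptimizedFor {V : Type*} {G : SimpleGraph V} (H : G.Subgraph) (y : V → ℕ) (r : V)
    (M : Set V) : Prop :=
  ∃ hr : r ∈ H.verts,
    (∀ v ∈ H.verts, (H.neighborSet v).ncard = 1 → v ∈ M) ∧
    (∀ v, ∀ hv : v ∈ H.verts, v ∉ M →
      IsGreatest {n : ℕ | ∃ w, ∃ hw : w ∈ H.verts, w ∈ M ∧
        (∀ p : H.coe.Walk ⟨r, hr⟩ ⟨w, hw⟩, p.IsPath →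
          (⟨v, hv⟩ : H.verts) ∈ p.support) ∧ y w = n} (y v))

open SimpleGraph

/-- Every feasible V-GSST solution `(H, y)` can be replaced by a feasible solution `(H', y')`
with `H'` a subtree of `H` spanning `T`, `y' ≤ y` pointwise, such that `H'` is a `T`-optimized
grade-respecting tree rooted at a terminal `r` of maximal required grade `ℓ`; for monotone
installation costs its cost is at most that of `(H, y)`.  In particular there is a minimum-cost
feasible solution that is a `T`-optimized grade-respecting tree rooted at `r`. -/
theorem exists_grade_respecting_optimal {V : Type*} [Fintype V]
    (G : SimpleGraph V) (hG : G.Connected)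
    (T : Set V) (ℓ : ℕ) (R : V → ℕ) (hR : ∀ v ∈ T, 1 ≤ R v ∧ R v ≤ ℓ)
    (c : ℕ → V → ℝ) (hc0 : ∀ v, c 0 v = 0)
    (hcmono : ∀ v : V, ∀ i j : ℕ, i ≤ j → j ≤ ℓ → c i v ≤ c j v)
    (H : G.Subgraph) (y : V → ℕ) (hfeas : VgsstFeasible T R ℓ H y)
    (r : V) (hrT : r ∈ T) (hRr : R r = ℓ) :
    ∃ (H' : G.Subgraph) (y' : V → ℕ),
      H' ≤ H ∧ (∀ v : V, y' v ≤ y v) ∧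
      VgsstFeasible T R ℓ H' y' ∧
      IsGRTRootedAt H' y' r ∧
      IsOptimizedFor H' y' r T ∧
      vgsstCost c H' y' ≤ vgsstCost c H y := by
  classical
  obtain ⟨hconn, hac, hTsub, hyℓ, hyout, hyT, hypath⟩ := hfeas
  have hacu := (isAcyclic_iff_path_unique).mp hac
  have hrH : r ∈ H.verts := hTsub hrT
  -- choose a path from the root to every vertex of `H`
  have hQex : ∀ v : H.verts, ∃ p : H.coe.Walk ⟨r, hrH⟩ v, p.IsPath := by
    intro v
    obtain ⟨p⟩ := hconn.coe.preconnected ⟨r, hrH⟩ v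
    exact ⟨p.toPath, p.toPath.2⟩
  choose Q hQ using hQex
  have hQuniq : ∀ (v : H.verts) (p : H.coe.Walk ⟨r, hrH⟩ v), p.IsPath → p = Q v :=
    fun v p hp => congrArg Subtype.val (hacu ⟨p, hp⟩ ⟨Q v, hQ v⟩)
  have hprefix : ∀ (a b : H.verts) (h : a ∈ (Q b).support),
      (Q a).support ⊆ (Q b).support := by
    intro a b h z hz
    have h1 : ((Q b).takeUntil a h) = Q a := hQuniq a _ ((hQ b).takeUntil h)
    rw [← h1] at hz
    exact Walk.support_takeUntil_subset _ h hz
  -- the new grades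
  let S : V → Finset V := fun v => Finset.univ.filter
    (fun t => t ∈ T ∧ ∃ (hv : v ∈ H.verts) (htH : t ∈ H.verts),
      (⟨v, hv⟩ : H.verts) ∈ (Q ⟨t, htH⟩).support)
  let y' : V → ℕ := fun v => (S v).sup R
  have hS : ∀ v t : V, t ∈ S v ↔ (t ∈ T ∧ ∃ (hv : v ∈ H.verts) (htH : t ∈ H.verts),
      (⟨v, hv⟩ : H.verts) ∈ (Q ⟨t, htH⟩).support) :=
    fun v t => Finset.mem_filter.trans (and_iff_right (Finset.mem_univ t))
  have hmono : ∀ (a x : H.verts), a ∈ (Q x).support → y' x.1 ≤ y' a.1 := by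
    intro a x hax
    apply Finset.sup_le
    intro t ht
    rw [hS] at ht
    obtain ⟨htT, hxH, htH, hx⟩ := ht
    have hsub : (Q x).support ⊆ (Q ⟨t, htH⟩).support := hprefix x ⟨t, htH⟩ hx
    exact Finset.le_sup ((hS a.1 t).mpr ⟨htT, a.2, htH, hsub hax⟩)
  have hy'le : ∀ v : V, y' v ≤ y v := by
    intro v
    apply Finset.sup_le
    intro t ht
    rw [hS] at ht
    obtain ⟨htT, hvH, htH, hsupp⟩ := ht
    have := hypath r hrT t htT hrH htH (Q ⟨t, htH⟩) (hQ _) ⟨v, hvH⟩ hsupp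
    rwa [hRr, min_eq_right (hR t htT).2] at this
  have hy'ℓ : ∀ v : V, y' v ≤ ℓ := by
    intro v
    apply Finset.sup_le
    intro t ht
    exact (hR t ((hS v t).mp ht).1).2
  have hy'T : ∀ t ∈ T, R t ≤ y' t := by
    intro t ht
    exact Finset.le_sup ((hS t t).mpr ⟨ht, hTsub ht, hTsub ht, Walk.end_mem_support _⟩)
  -- the pruned subgraph
  let H' : G.Subgraph :=
    { verts := {v | ∃ (hv : v ∈ H.verts) (t : V) (_ : t ∈ T) (htH : t ∈ H.verts),
        (⟨v, hv⟩ : H.verts) ∈ (Q ⟨t, htH⟩).support}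
      Adj := fun u v => ∃ (hu : u ∈ H.verts) (hv : v ∈ H.verts) (t : V) (_ : t ∈ T)
        (htH : t ∈ H.verts), (Q ⟨t, htH⟩).toSubgraph.Adj ⟨u, hu⟩ ⟨v, hv⟩
      adj_sub := by
        rintro u v ⟨hu, hv, t, ht, htH, hadj⟩
        exact H.adj_sub ((Q ⟨t, htH⟩).toSubgraph.adj_sub hadj)
      edge_vert := by
        rintro u v ⟨hu, hv, t, ht, htH, hadj⟩
        exact ⟨hu, t, ht, htH,
          (Walk.mem_verts_toSubgraph _).mp ((Q ⟨t, htH⟩).toSubgraph.edge_vert hadj)⟩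
      symm := by
        constructor
        rintro u v ⟨hu, hv, t, ht, htH, hadj⟩
        exact ⟨hv, hu, t, ht, htH, hadj.symm⟩ }
  have hle : H' ≤ H := by
    constructor
    · rintro v ⟨hv, -⟩
      exact hv
    · rintro u v ⟨hu, hv, t, ht, htH, hadj⟩
      exact (Q ⟨t, htH⟩).toSubgraph.adj_sub hadj
  have hT' : T ⊆ H'.verts := by
    intro t ht
    exact ⟨hTsub ht, t, ht, hTsub ht, Walk.end_mem_support _⟩
  have hrH' : r ∈ H'.verts := hT' hrT
  -- membership in `S` versus membership in `H'`
  have hvertsS : ∀ v : V, v ∈ H'.verts ↔ (S v).Nonempty := by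
    intro v
    constructor
    · rintro ⟨hv, t, ht, htH, hsupp⟩
      exact ⟨t, (hS v t).mpr ⟨ht, hv, htH, hsupp⟩⟩
    · rintro ⟨t, ht⟩
      obtain ⟨htT, hv, htH, hsupp⟩ := (hS v t).mp ht
      exact ⟨hv, t, htT, htH, hsupp⟩
  have hy'0 : ∀ v : V, v ∉ H'.verts → y' v = 0 := by
    intro v hv
    refine Nat.le_antisymm (Finset.sup_le ?_) (Nat.zero_le _)
    intro t ht
    obtain ⟨htT, hvH, htH, hsupp⟩ := (hS v t).mp ht
    exact absurd ⟨hvH, t, htT, htH, hsupp⟩ hv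
  -- connectivity of `H'`
  have step : ∀ (t : V) (ht : t ∈ T) (htH : t ∈ H.verts) (a b : H.verts)
      (p : H.coe.Walk a b), (∀ e ∈ p.edges, e ∈ (Q ⟨t, htH⟩).edges) →
      ∀ (ha : a.1 ∈ H'.verts) (hb : b.1 ∈ H'.verts),
      H'.coe.Reachable ⟨a.1, ha⟩ ⟨b.1, hb⟩ := by
    intro t ht htH a b p
    induction p with
    | nil => exact fun _ ha hb => Reachable.refl _
    | @cons x z b h q ih =>
      intro hsub ha hb
      have he : s(x, z) ∈ (Q ⟨t, htH⟩).edges := by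
        apply hsub
        rw [Walk.edges_cons]
        exact List.mem_cons_self
      have hadj : (Q ⟨t, htH⟩).toSubgraph.Adj x z := by
        have := (Walk.mem_edges_toSubgraph (Q ⟨t, htH⟩)).mpr he
        rwa [Subgraph.mem_edgeSet] at this
      have hadj' : H'.Adj x.1 z.1 := ⟨x.2, z.2, t, ht, htH, hadj⟩
      have hz : z.1 ∈ H'.verts := H'.edge_vert hadj'.symm
      have h1 : H'.coe.Adj ⟨x.1, ha⟩ ⟨z.1, hz⟩ := hadj'
      exact (h1.reachable).trans
        (ih (fun e he' => hsub e (by rw [Walk.edges_cons]; exact List.mem_cons_of_mem _ he'))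
          hz hb)
  have hreach : ∀ x : H'.verts, H'.coe.Reachable ⟨r, hrH'⟩ x := by
    intro x
    obtain ⟨hv, t, ht, htH, hsupp⟩ := x.2
    have := step t ht htH ⟨r, hrH⟩ ⟨x.1, hv⟩ ((Q ⟨t, htH⟩).takeUntil _ hsupp)
      (fun e he => Walk.edges_takeUntil_subset _ hsupp he) hrH' x.2
    exact this
  have hpre' : H'.coe.Preconnected := by
    intro a b
    exact (hreach a).symm.trans (hreach b)
  have hconn' : H'.Connected := by
    rw [Subgraph.connected_iff]
    exact ⟨⟨hpre'⟩, ⟨r, hrH'⟩⟩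
  -- acyclicity of `H'`
  have hincinj : Function.Injective (Subgraph.inclusion hle) := Subgraph.inclusion.injective hle
  have hacH' : H'.coe.IsAcyclic := by
    intro v p hp
    exact hac _ (hp.map hincinj)
  -- transferring paths into `H`
  have hmapPath : ∀ {a b : H'.verts} (p : H'.coe.Walk a b), p.IsPath →
      (p.map (Subgraph.inclusion hle)).IsPath :=
    fun p hp => (Walk.map_isPath_iff_of_injective hincinj).mpr hp
  -- the terminal-path condition for `(H', y')`
  have key7 : ∀ u ∈ T, ∀ v ∈ T, ∀ (hu : u ∈ H'.verts) (hv : v ∈ H'.verts),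
      ∀ p : H'.coe.Walk ⟨u, hu⟩ ⟨v, hv⟩,
        p.IsPath → ∀ w ∈ p.support, min (R u) (R v) ≤ y' w.1 := by
    intro u hu v hv huH' hvH' p hp w hw
    have huH : u ∈ H.verts := hle.1 huH'
    have hvH : v ∈ H.verts := hle.1 hvH'
    have hp' := hmapPath p hp
    have hq : (((Q ⟨u, huH⟩).reverse.append (Q ⟨v, hvH⟩)).bypass).IsPath :=
      Walk.bypass_isPath _
    have heq : p.map (Subgraph.inclusion hle) =
        ((Q ⟨u, huH⟩).reverse.append (Q ⟨v, hvH⟩)).bypass :=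
      congrArg Subtype.val (hacu ⟨p.map (Subgraph.inclusion hle), hp'⟩ ⟨_, hq⟩)
    have hw' : Subgraph.inclusion hle w ∈ (p.map (Subgraph.inclusion hle)).support := by
      rw [Walk.support_map]
      exact List.mem_map_of_mem hw
    rw [heq] at hw'
    have hw2 := Walk.support_bypass_subset _ hw'
    erw [Walk.support_append] at hw2
    rcases List.mem_append.mp hw2 with h1 | h2
    · erw [Walk.support_reverse, List.mem_reverse] at h1
      have : R u ≤ y' w.1 :=
        Finset.le_sup ((hS w.1 u).mpr ⟨hu, (hle.1 w.2), huH, h1⟩)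
      exact le_trans (min_le_left _ _) this
    · have h1 : Subgraph.inclusion hle w ∈ (Q ⟨v, hvH⟩).support := List.tail_subset _ h2
      have : R v ≤ y' w.1 :=
        Finset.le_sup ((hS w.1 v).mpr ⟨hv, (hle.1 w.2), hvH, h1⟩)
      exact le_trans (min_le_right _ _) this
  -- chains are non-increasing along paths from the root in `H`
  have hchain : ∀ (a x : H.verts) (p : H.coe.Walk a x), a = ⟨r, hrH⟩ → p.IsPath →
      (p.support.map fun w => y' w.1).Chain' (fun a b => b ≤ a) := by
    intro a x p
    induction p using SimpleGraph.Walk.concatRec with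
    | Hnil => intro _ _; exact List.isChain_singleton _
    | @Hconcat u v w q h ih =>
      intro ha hp
      subst ha
      have hq : q.IsPath := by
        rw [Walk.concat_eq_append] at hp
        exact hp.of_append_left
      have hchq := ih rfl hq
      rw [Walk.support_concat, List.map_append]
      show List.IsChain _ _
      rw [List.isChain_append]
      refine ⟨hchq, List.isChain_singleton _, ?_⟩
      intro a' ha' b' hb'
      simp only [List.head?_cons, Option.mem_some_iff, List.map] at hb'
      have hlast : (q.support.map fun w => y' w.1).getLast? = some (y' v.1) := by
        rw [List.getLast?_map]
        rw [List.getLast?_eq_getLast q.support_ne_nil, Walk.getLast_support]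
        rfl
      rw [hlast, Option.mem_some_iff] at ha'
      subst ha'
      subst hb'
      -- need `y' w.1 ≤ y' v.1`
      have hvq : v ∈ (Q w).support := by
        have heq : q.concat h = Q w := hQuniq w _ hp
        rw [← heq, Walk.support_concat]
        exact List.mem_append_left _ q.end_mem_support
      exact hmono v w hvq
  -- grade-respecting along paths from `r` in `H'`
  have hGRT : ∀ (v : H'.verts) (p : H'.coe.Walk ⟨r, hrH'⟩ v),
      p.IsPath → (p.support.map fun w => y' w.1).Chain' (fun a b => b ≤ a) := by
    intro v p hp
    have hp' := hmapPath p hp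
    have := hchain ⟨r, hrH⟩ (Subgraph.inclusion hle v) (p.map (Subgraph.inclusion hle)) rfl hp'
    erw [Walk.support_map, List.map_map] at this
    exact this
  -- leaves of `H'` are terminals
  have hleaves : ∀ v ∈ H'.verts, (H'.neighborSet v).ncard = 1 → v ∈ T := by
    intro v hvH' hcard
    by_contra hvT
    obtain ⟨hv, t, ht, htH, hsupp⟩ := hvH'
    have hvr : v ≠ r := fun h => hvT (h ▸ hrT)
    have hvt : v ≠ t := fun h => hvT (h ▸ ht)
    set p := Q ⟨t, htH⟩ with hpdef
    set vh : H.verts := (⟨v, hv⟩ : H.verts) with hvhdef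
    have hne1 : vh ≠ (⟨r, hrH⟩ : H.verts) := fun h => hvr (congrArg Subtype.val h)
    have hne2 : vh ≠ (⟨t, htH⟩ : H.verts) := fun h => hvt (congrArg Subtype.val h)
    -- two distinct neighbours on the path
    obtain ⟨a1, h1, q1', hq1'⟩ := Walk.exists_eq_cons_of_ne hne1 ((p.takeUntil vh hsupp).reverse)
    obtain ⟨b1, h2, q2', hq2'⟩ := Walk.exists_eq_cons_of_ne hne2 (p.dropUntil vh hsupp)
    have hea : s(vh, a1) ∈ p.edges := by
      apply Walk.edges_takeUntil_subset _ hsupp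
      have : s(vh, a1) ∈ (p.takeUntil vh hsupp).reverse.edges := by
        rw [hq1', Walk.edges_cons]
        exact List.mem_cons_self
      rwa [Walk.edges_reverse, List.mem_reverse] at this
    have heb : s(vh, b1) ∈ p.edges := by
      apply Walk.edges_dropUntil_subset _ hsupp
      rw [hq2', Walk.edges_cons]
      exact List.mem_cons_self
    have hamem : a1 ∈ (p.takeUntil vh hsupp).support := by
      have : a1 ∈ (p.takeUntil vh hsupp).reverse.support := by
        rw [hq1', Walk.support_cons]
        exact List.mem_cons_of_mem _ q1'.start_mem_support
      rwa [Walk.support_reverse, List.mem_reverse] at this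
    have hbmem : b1 ∈ (p.dropUntil vh hsupp).support.tail := by
      rw [hq2', Walk.support_cons]
      exact q2'.start_mem_support
    have hnodup : ((p.takeUntil vh hsupp).support ++ (p.dropUntil vh hsupp).support.tail).Nodup := by
      have hnd : p.support.Nodup := (hQ ⟨t, htH⟩).support_nodup
      rw [← Walk.take_spec p hsupp, Walk.support_append] at hnd
      exact hnd
    have hab : a1 ≠ b1 := by
      intro h
      subst h
      exact (List.disjoint_of_nodup_append hnodup) hamem hbmem
    have hadja : H'.Adj v a1.1 := by
      refine ⟨hv, a1.2, t, ht, htH, ?_⟩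
      have := (Walk.mem_edges_toSubgraph p).mpr hea
      rwa [Subgraph.mem_edgeSet] at this
    have hadjb : H'.Adj v b1.1 := by
      refine ⟨hv, b1.2, t, ht, htH, ?_⟩
      have := (Walk.mem_edges_toSubgraph p).mpr heb
      rwa [Subgraph.mem_edgeSet] at this
    have h2lt : 1 < (H'.neighborSet v).ncard := by
      rw [Set.one_lt_ncard_iff (Set.toFinite _)]
      exact ⟨a1.1, b1.1, hadja, hadjb, fun h => hab (Subtype.ext h)⟩
    omega
  -- the optimization property
  have hopt : ∀ v, ∀ hv : v ∈ H'.verts, v ∉ T →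
      IsGreatest {n : ℕ | ∃ w, ∃ hw : w ∈ H'.verts, w ∈ T ∧
        (∀ p : H'.coe.Walk ⟨r, hrH'⟩ ⟨w, hw⟩, p.IsPath →
          (⟨v, hv⟩ : H'.verts) ∈ p.support) ∧ y' w = n} (y' v) := by
    intro v hv hvT
    constructor
    · -- membership
      obtain ⟨t0, ht0, hsup⟩ := Finset.exists_mem_eq_sup (S v) ((hvertsS v).mp hv) R
      obtain ⟨ht0T, hvH, ht0H, hsupp⟩ := (hS v t0).mp ht0
      have h1 : y' t0 ≤ y' v := hmono ⟨v, hvH⟩ ⟨t0, ht0H⟩ hsupp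
      have h2 : y' v ≤ y' t0 := by
        rw [show y' v = R t0 from hsup]
        exact hy'T t0 ht0T
      refine ⟨t0, hT' ht0T, ht0T, ?_, le_antisymm h1 h2⟩
      intro p hp
      have hp' := hmapPath p hp
      have heq : p.map (Subgraph.inclusion hle) = Q ⟨t0, ht0H⟩ := hQuniq _ _ hp'
      have hmem : (⟨v, hvH⟩ : H.verts) ∈ (p.map (Subgraph.inclusion hle)).support := by
        rw [heq]; exact hsupp
      rw [Walk.support_map] at hmem
      obtain ⟨w', hw', heq'⟩ := List.mem_map.mp hmem
      have hval : w'.1 = v := by exact congrArg Subtype.val heq'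
      have hw'' : w' = ⟨v, hv⟩ := Subtype.ext hval
      rwa [← hw'']
    · -- upper bound
      rintro n ⟨w, hw, hwT, hall, rfl⟩
      obtain ⟨pw⟩ := hpre' ⟨r, hrH'⟩ ⟨w, hw⟩
      have hvmem := hall pw.toPath pw.toPath.2
      have hp' := hmapPath pw.toPath.1 pw.toPath.2
      have heq := hQuniq ((Subgraph.inclusion hle) ⟨w, hw⟩)
        ((pw.toPath : H'.coe.Walk ⟨r, hrH'⟩ ⟨w, hw⟩).map (Subgraph.inclusion hle)) hp'
      have hvs : (⟨v, hle.1 hv⟩ : H.verts)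
          ∈ (Q ((Subgraph.inclusion hle) ⟨w, hw⟩)).support := by
        erw [← heq, Walk.support_map]
        exact List.mem_map_of_mem hvmem
      exact hmono ⟨v, hle.1 hv⟩ _ hvs
  -- cost comparison
  have hcost : vgsstCost c H' y' ≤ vgsstCost c H y := by
    apply Finset.sum_le_sum
    intro v _
    by_cases hv : v ∈ H'.verts
    · rw [Set.indicator_of_mem hv, Set.indicator_of_mem (hle.1 hv)]
      exact hcmono v _ _ (hy'le v) (hyℓ v)
    · rw [Set.indicator_of_notMem hv]
      by_cases hv2 : v ∈ H.verts
      · rw [Set.indicator_of_mem hv2]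
        calc (0 : ℝ) = c 0 v := (hc0 v).symm
          _ ≤ c (y v) v := hcmono v 0 _ (Nat.zero_le _) (hyℓ v)
      · rw [Set.indicator_of_notMem hv2]
  exact ⟨H', y', hle, hy'le,
    ⟨hconn', hacH', hT', hy'ℓ, hy'0, hy'T, key7⟩,
    ⟨hrH', hGRT⟩, ⟨hrH', hleaves, hopt⟩, hcost⟩
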